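/- Let κ be a regular uncountable cardinal and let C⃗ = ⟨C_γ : γ ∈ S⟩ be a C-sequence over S ⊆ κ. If C⃗ is strongly amenable in κ, then for every club D ⊆ κ there are club-many δ < κ such that sup((D ∩ δ) \ C_γ) = δ for every γ ∈ S; and conversely, the latter property implies strong amenability. -/

import Mathlib

open Cardinal Ordinal Set

universe u

/-- bounded families of ordinals below `κ.ord` have bounds below `κ.ord` -/
lemma aux_bdd {κ : Cardinal.{u}} (hκreg : κ.IsRegular)
    (g : Ordinal.{u} → Ordinal.{u}) (hg : ∀ α < κ.ord, g α < κ.ord)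
    {x : Ordinal.{u}} (hx : x < κ.ord) : ∃ b < κ.ord, ∀ α < x, g α ≤ b := by
  set f : Shrink.{u} (Iio x) → Ordinal.{u} := fun i => g ((equivShrink (Iio x)).symm i) with hf
  have hcard : #(Shrink.{u} (Iio x)) < κ.ord.cof := by
    rw [hκreg.cof_eq]
    have h1 : Cardinal.lift.{u+1} #(Shrink.{u} (Iio x)) = Cardinal.lift.{u} #(Iio x) :=
      lift_mk_shrink' _
    rw [Cardinal.mk_Iio_ordinal, Cardinal.lift_lift, Cardinal.lift_inj] at h1
    rw [h1]
    exact Cardinal.lt_ord.mp hx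
  have hfb : ∀ i, f i < κ.ord := fun i =>
    hg _ (lt_trans ((equivShrink (Iio x)).symm i).2 hx)
  refine ⟨iSup f, Ordinal.iSup_lt_ord hcard hfb, ?_⟩
  intro α hα
  have h2 : g α = f (equivShrink (Iio x) ⟨α, hα⟩) := by simp [hf]
  rw [h2]
  exact Ordinal.le_iSup f _

/-- above any `ζ < κ.ord` there is a `δ < κ.ord` that is a limit, an accumulation
point of the unbounded set `D`, and closed under `g`. -/
lemma aux_accpt {κ : Cardinal.{u}} (hκreg : κ.IsRegular) (hκunc : ℵ₀ < κ)
    {D : Set Ordinal.{u}} (hD1 : D ⊆ Set.Iio κ.ord)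
    (hD2 : ∀ α < κ.ord, ∃ β ∈ D, α ≤ β)
    (g : Ordinal.{u} → Ordinal.{u}) (hg : ∀ α < κ.ord, g α < κ.ord)
    {ζ : Ordinal.{u}} (hζ : ζ < κ.ord) :
    ∃ δ, ζ < δ ∧ δ < κ.ord ∧ Order.IsSuccLimit δ ∧
      (∀ α < δ, ∃ β ∈ D, α < β ∧ β < δ) ∧ (∀ α < δ, g α < δ) := by
  classical
  have holim : Order.IsSuccLimit κ.ord := isSuccLimit_ord hκreg.aleph0_le
  -- one step
  have hstep : ∀ x, ∃ y, x < κ.ord →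
      (x < y ∧ y < κ.ord ∧ ∃ β ∈ D, x < β ∧ β ≤ y ∧ ∀ α < x, g α < y) := by
    intro x
    by_cases hx : x < κ.ord
    · obtain ⟨b, hb, hbspec⟩ := aux_bdd hκreg g hg hx
      obtain ⟨β, hβD, hβ⟩ := hD2 (x + 1) (holim.succ_lt hx)
      refine ⟨max β (b + 1), fun _ => ⟨?_, ?_, β, hβD, ?_, le_max_left _ _, ?_⟩⟩
      · exact lt_of_lt_of_le (lt_of_lt_of_le (lt_add_one x) hβ) (le_max_left _ _)
      · exact max_lt (hD1 hβD) (holim.succ_lt hb)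
      · exact lt_of_lt_of_le (lt_add_one x) hβ
      · intro α hα
        exact lt_of_le_of_lt (hbspec α hα) (lt_of_lt_of_le (lt_add_one b) (le_max_right _ _))
    · exact ⟨0, fun h => absurd h hx⟩
  choose Y hY using hstep
  set f : ℕ → Ordinal.{u} := fun n => Nat.rec ζ (fun _ ih => Y ih) n with hfdef
  have hf0 : f 0 = ζ := rfl
  have hfs : ∀ n, f (n + 1) = Y (f n) := fun n => rfl
  have hflt : ∀ n, f n < κ.ord := by
    intro n
    induction n with
    | zero => exact hζ
    | succ n ih => rw [hfs]; exact ((hY (f n)) ih).2.1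
  have hmono : ∀ n, f n < f (n + 1) := by
    intro n; rw [hfs]; exact ((hY (f n)) (hflt n)).1
  have hmono' : ∀ m n, m < n → f m < f n := by
    intro m n h
    induction n with
    | zero => omega
    | succ n ih =>
      rcases Nat.lt_succ_iff_lt_or_eq.mp h with h' | h'
      · exact lt_trans (ih h') (hmono n)
      · rw [h']; exact hmono n
  set δ : Ordinal.{u} := ⨆ n, f n with hδdef
  have hδκ : δ < κ.ord := by
    apply Ordinal.iSup_lt_ord_lift _ hflt
    rw [mk_nat, Cardinal.lift_aleph0, hκreg.cof_eq]
    exact hκunc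
  have hle : ∀ n, f n ≤ δ := fun n => Ordinal.le_iSup f n
  have hltδ : ∀ n, f n < δ := fun n => lt_of_lt_of_le (hmono n) (hle (n + 1))
  have hexn : ∀ α < δ, ∃ n, α < f n := by
    intro α hα
    exact Ordinal.lt_iSup_iff.mp hα
  have hζδ : ζ < δ := by rw [← hf0]; exact hltδ 0
  have hlim : Order.IsSuccLimit δ := by
    rw [Ordinal.isSuccLimit_iff, Order.isSuccPrelimit_iff_succ_lt]
    constructor
    · exact fun h => absurd (h ▸ hζδ) (not_lt_zero (a := ζ))
    · intro a ha
      obtain ⟨n, hn⟩ := hexn a ha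
      exact lt_of_le_of_lt (Order.succ_le_of_lt hn) (hltδ n)
  refine ⟨δ, hζδ, hδκ, hlim, ?_, ?_⟩
  · intro α hα
    obtain ⟨n, hn⟩ := hexn α hα
    obtain ⟨β, hβD, hβ1, hβ2, _⟩ := ((hY (f n)) (hflt n)).2.2
    have hβδ : β < δ := lt_of_le_of_lt (le_trans hβ2 (le_of_eq (hfs n).symm)) (hltδ (n + 1))
    exact ⟨β, hβD, lt_trans hn hβ1, hβδ⟩
  · intro α hα
    obtain ⟨n, hn⟩ := hexn α hα
    obtain ⟨β, _, _, _, hgβ⟩ := ((hY (f n)) (hflt n)).2.2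
    have h2 : g α < f (n + 1) := by rw [hfs n]; exact hgβ α hn
    exact lt_trans h2 (hltδ (n + 1))

theorem stmt_6 (κ : Cardinal) (hκreg : κ.IsRegular) (hκunc : ℵ₀ < κ)
    (S : Set Ordinal) (hS : S ⊆ Set.Iio κ.ord)
    (C : Ordinal → Set Ordinal)
    (hCsub : ∀ β ∈ S, C β ⊆ Set.Iio β)
    (hCclosed : ∀ β ∈ S, ∀ δ : Ordinal, δ < β → Order.IsSuccLimit δ →
      (∀ α < δ, ∃ γ ∈ C β, α < γ ∧ γ < δ) → δ ∈ C β)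
    (hCsup : ∀ β ∈ S, sSup (C β) = sSup (Set.Iio β)) :
    -- strong amenability ...
    (∀ D : Set Ordinal, D ⊆ Set.Iio κ.ord →
        (∀ α < κ.ord, ∃ β ∈ D, α ≤ β) →
        (∀ δ : Ordinal, δ < κ.ord → Order.IsSuccLimit δ → (∀ α < δ, ∃ β ∈ D, α < β ∧ β < δ) → δ ∈ D) →
        ∃ ε < κ.ord, ∀ β ∈ S, D ∩ Set.Iio β ⊆ C β → β ≤ ε)
    ↔ -- ... iff for every club D, club-many δ satisfy sup((D ∩ δ) \ C γ) = δ for all γ ∈ S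
    (∀ D : Set Ordinal, D ⊆ Set.Iio κ.ord →
        (∀ α < κ.ord, ∃ β ∈ D, α ≤ β) →
        (∀ δ : Ordinal, δ < κ.ord → Order.IsSuccLimit δ → (∀ α < δ, ∃ β ∈ D, α < β ∧ β < δ) → δ ∈ D) →
        ∃ E : Set Ordinal, E ⊆ Set.Iio κ.ord ∧
          (∀ α < κ.ord, ∃ β ∈ E, α ≤ β) ∧
          (∀ δ : Ordinal, δ < κ.ord → Order.IsSuccLimit δ → (∀ α < δ, ∃ β ∈ E, α < β ∧ β < δ) → δ ∈ E) ∧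
          ∀ δ ∈ E, ∀ γ ∈ S, ∀ α < δ, ∃ β ∈ D, β < δ ∧ β ∉ C γ ∧ α < β) := by
  classical
  have holim : Order.IsSuccLimit κ.ord := isSuccLimit_ord hκreg.aleph0_le
  constructor
  · -- strong amenability implies the club-many reflection property
    intro hSA D hD1 hD2 hD3
    refine ⟨{δ | δ < κ.ord ∧ ∀ γ ∈ S, ∀ α < δ, ∃ β ∈ D, β < δ ∧ β ∉ C γ ∧ α < β},
      fun δ h => h.1, ?_, ?_, fun δ h => h.2⟩
    · -- unboundedness : the crux
      intro ζ hζ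
      by_contra hcon
      push_neg at hcon
      have hbad : ∀ δ, ζ ≤ δ → δ < κ.ord →
          ¬ (∀ γ ∈ S, ∀ α < δ, ∃ β ∈ D, β < δ ∧ β ∉ C γ ∧ α < β) := by
        intro δ h1 h2 h3
        exact absurd (hcon δ ⟨h2, h3⟩) (not_lt_of_ge h1)
      set A : Ordinal → Prop := fun δ =>
        ζ ≤ δ ∧ δ < κ.ord ∧ Order.IsSuccLimit δ ∧ (∀ α < δ, ∃ β ∈ D, α < β ∧ β < δ) with hA
      have hwit : ∀ δ, ∃ γ α, A δ →
          (γ ∈ S ∧ α < δ ∧ ∀ β ∈ D, β < δ → α < β → β ∈ C γ) := by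
        intro δ
        by_cases h : A δ
        · have hng : ¬ (∀ γ ∈ S, ∀ α < δ, ∃ β ∈ D, β < δ ∧ β ∉ C γ ∧ α < β) :=
            hbad δ h.1 h.2.1
          push_neg at hng
          obtain ⟨γ, hγS, α, hα, hspec⟩ := hng
          refine ⟨γ, α, fun _ => ⟨hγS, hα, fun β hβ h1 h2 => ?_⟩⟩
          by_contra hC
          exact absurd h2 (not_lt_of_ge (hspec β hβ h1 hC))
        · exact ⟨0, 0, fun h' => absurd h' h⟩
      choose Γ F hΓF using hwit
      -- pressing down
      have hpress : ∃ α', α' < κ.ord ∧ ∀ η < κ.ord, ∃ δ, η < δ ∧ A δ ∧ F δ ≤ α' := by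
        by_contra hnp
        push_neg at hnp
        have hg' : ∀ α', ∃ η, α' < κ.ord →
            (η < κ.ord ∧ ∀ δ, η < δ → A δ → α' < F δ) := by
          intro α'
          by_cases h : α' < κ.ord
          · obtain ⟨η, hη, hspec⟩ := hnp α' h
            exact ⟨η, fun _ => ⟨hη, hspec⟩⟩
          · exact ⟨0, fun h' => absurd h' h⟩
        choose g hgspec using hg'
        have hgκ : ∀ α < κ.ord, g α < κ.ord := fun α h => (hgspec α h).1
        obtain ⟨δ₀, hζδ₀, hδ₀κ, hδ₀lim, hδ₀acc, hδ₀cl⟩ :=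
          aux_accpt hκreg hκunc hD1 hD2 g hgκ hζ
        have hAδ₀ : A δ₀ := ⟨le_of_lt hζδ₀, hδ₀κ, hδ₀lim, hδ₀acc⟩
        obtain ⟨_, hFδ₀, _⟩ := hΓF δ₀ hAδ₀
        have h1 : g (F δ₀) < δ₀ := hδ₀cl _ hFδ₀
        exact absurd ((hgspec (F δ₀) (lt_trans hFδ₀ hδ₀κ)).2 δ₀ h1 hAδ₀) (lt_irrefl _)
      obtain ⟨α', hα'κ, hU⟩ := hpress
      set k : Ordinal → Ordinal :=
        fun δ => if A δ ∧ F δ ≤ α' then Γ δ else 0 with hk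
      have hkκ : ∀ x < κ.ord, k x < κ.ord := by
        intro x hx
        show (if A x ∧ F x ≤ α' then Γ x else 0) < κ.ord
        split
        · next h => exact Set.mem_Iio.mp (hS (hΓF x h.1).1)
        · exact holim.pos
      set D₀ : Set Ordinal := {β | β ∈ D ∧ α' < β ∧ ∀ x < β, k x < β} with hD₀
      have hD₀1 : D₀ ⊆ Set.Iio κ.ord := fun β h => hD1 h.1
      have hD₀2 : ∀ α < κ.ord, ∃ β ∈ D₀, α ≤ β := by
        intro η hη
        obtain ⟨δ, hδ1, hδ2, hδ3, hδ4, hδ5⟩ :=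
          aux_accpt hκreg hκunc hD1 hD2 k hkκ (max_lt hη hα'κ)
        exact ⟨δ, ⟨hD3 δ hδ2 hδ3 hδ4, lt_of_le_of_lt (le_max_right _ _) hδ1, hδ5⟩,
          le_of_lt (lt_of_le_of_lt (le_max_left _ _) hδ1)⟩
      have hD₀3 : ∀ δ : Ordinal, δ < κ.ord → Order.IsSuccLimit δ →
          (∀ α < δ, ∃ β ∈ D₀, α < β ∧ β < δ) → δ ∈ D₀ := by
        intro δ hδκ hδlim hcof
        refine ⟨hD3 δ hδκ hδlim (fun α hα => ?_), ?_, ?_⟩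
        · obtain ⟨β, hβ, h1, h2⟩ := hcof α hα
          exact ⟨β, hβ.1, h1, h2⟩
        · obtain ⟨β, hβ, _, hβδ⟩ := hcof 0 hδlim.pos
          exact lt_trans hβ.2.1 hβδ
        · intro x hx
          obtain ⟨β, hβ, h1, h2⟩ := hcof x hx
          exact lt_trans (hβ.2.2 x h1) h2
      obtain ⟨ε, hεκ, hεspec⟩ := hSA D₀ hD₀1 hD₀2 hD₀3
      obtain ⟨δ₁, hδ₁gt, hAδ₁, hFδ₁⟩ := hU (max ε α') (max_lt hεκ hα'κ)
      obtain ⟨hΓS, hFlt, hcont⟩ := hΓF δ₁ hAδ₁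
      have hεδ₁ : ε < δ₁ := lt_of_le_of_lt (le_max_left _ _) hδ₁gt
      have hα'δ₁ : α' < δ₁ := lt_of_le_of_lt (le_max_right _ _) hδ₁gt
      have hδ₁lim : Order.IsSuccLimit δ₁ := hAδ₁.2.2.1
      have hδ₁acc : ∀ α < δ₁, ∃ β ∈ D, α < β ∧ β < δ₁ := hAδ₁.2.2.2
      set γ₁ := Γ δ₁ with hγ₁
      have hcont' : ∀ β ∈ D, β < δ₁ → α' < β → β ∈ C γ₁ := by
        intro β h1 h2 h3
        exact hcont β h1 h2 (lt_of_le_of_lt hFδ₁ h3)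
      have hδ₁le : δ₁ ≤ γ₁ := by
        by_contra h
        push_neg at h
        obtain ⟨β, hβD, hβ1, hβ2⟩ := hδ₁acc (max α' γ₁) (max_lt hα'δ₁ h)
        have hβC : β ∈ C γ₁ := hcont' β hβD hβ2 (lt_of_le_of_lt (le_max_left _ _) hβ1)
        exact absurd (Set.mem_Iio.mp (hCsub γ₁ hΓS hβC))
          (lt_asymm (lt_of_le_of_lt (le_max_right _ _) hβ1))
      have hmemC : δ₁ < γ₁ → δ₁ ∈ C γ₁ := by
        intro h
        apply hCclosed γ₁ hΓS δ₁ h hδ₁lim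
        intro α hα
        obtain ⟨β, hβD, hβ1, hβ2⟩ := hδ₁acc (max α α') (max_lt hα hα'δ₁)
        exact ⟨β, hcont' β hβD hβ2 (lt_of_le_of_lt (le_max_right _ _) hβ1),
          lt_of_le_of_lt (le_max_left _ _) hβ1, hβ2⟩
      have hsub : D₀ ∩ Set.Iio γ₁ ⊆ C γ₁ := by
        rintro β ⟨⟨hβD, hβα', hβk⟩, hβγ⟩
        have hβδ₁ : β ≤ δ₁ := by
          by_contra h
          push_neg at h
          have hkδ₁ : k δ₁ = γ₁ := by
            show (if A δ₁ ∧ F δ₁ ≤ α' then Γ δ₁ else 0) = γ₁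
            rw [if_pos ⟨hAδ₁, hFδ₁⟩]
          have h2 : γ₁ < β := hkδ₁ ▸ hβk δ₁ h
          exact absurd (Set.mem_Iio.mp hβγ) (lt_asymm h2)
        rcases lt_or_eq_of_le hβδ₁ with h | h
        · exact hcont' β hβD h hβα'
        · rw [h]
          exact hmemC (h ▸ Set.mem_Iio.mp hβγ)
      exact absurd (hεspec γ₁ hΓS hsub) (not_le_of_gt (lt_of_lt_of_le hεδ₁ hδ₁le))
    · -- closedness
      intro δ hδκ hδlim hcof
      refine ⟨hδκ, fun γ hγ α hα => ?_⟩
      obtain ⟨δ', hδ'E, h1, h2⟩ := hcof α hα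
      obtain ⟨β, hβD, hb1, hb2, hb3⟩ := hδ'E.2 γ hγ α h1
      exact ⟨β, hβD, lt_trans hb1 h2, hb2, hb3⟩
  · -- converse
    intro hRHS D hD1 hD2 hD3
    obtain ⟨E, hE1, hE2, hE3, hE4⟩ := hRHS D hD1 hD2 hD3
    obtain ⟨δ₀, hδ₀E, h1δ₀⟩ := hE2 1 (by simpa using holim.succ_lt holim.pos)
    refine ⟨δ₀, hE1 hδ₀E, ?_⟩
    intro β hβS hsubC
    obtain ⟨β', hβ'D, hβ'δ₀, hβ'C, _⟩ :=
      hE4 δ₀ hδ₀E β hβS 0 (lt_of_lt_of_le zero_lt_one h1δ₀)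
    have hββ' : β ≤ β' := le_of_not_gt (fun h => hβ'C (hsubC ⟨hβ'D, h⟩))
    exact le_of_lt (lt_of_le_of_lt hββ' hβ'δ₀)
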